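/- Let M_1,…,M_s be perfect matchings of K_{2n} such that each edge of K_{2n} appears in at most k of them. If k ≤ (1/(e·2x(2n-1)·C(n-1,x-1))) · (Σ_{j=2x-n}^{x} C(2x,2j)·(2j)!/(j!·2^j) − e), then there exists a perfect matching of K_{2n} that agrees with each M_i in at most x-1 edges. -/

import Mathlib

open Finset

/-- A matching: a set of pairwise disjoint edges (2-element vertex sets). -/
def IsMatching {V : Type} [DecidableEq V] (M : Finset (Finset V)) : Prop :=
  (∀ e ∈ M, e.card = 2) ∧ (M : Set (Finset V)).Pairwise Disjoint

/-- A perfect matching of the complete graph on `V`: a matching covering every vertex. -/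
def IsPerfectMatching {V : Type} [DecidableEq V] (M : Finset (Finset V)) : Prop :=
  IsMatching M ∧ ∀ v : V, ∃ e ∈ M, v ∈ e

section Combinatorics
variable {V : Type} [DecidableEq V]

def pmProp (s : Finset V) (M : Finset (Finset V)) : Prop :=
  (∀ e ∈ M, e.card = 2) ∧ (∀ a ∈ M, ∀ b ∈ M, a ≠ b → Disjoint a b) ∧ ∀ v ∈ s, ∃ e ∈ M, v ∈ e

instance (s : Finset V) : DecidablePred (pmProp s) := fun M => by
  unfold pmProp; infer_instance

def pmOn (s : Finset V) : Finset (Finset (Finset V)) :=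
  s.powerset.powerset.filter (pmProp s)

lemma mem_pmOn {s : Finset V} {M : Finset (Finset V)} :
    M ∈ pmOn s ↔ (∀ e ∈ M, e ⊆ s) ∧ pmProp s M := by
  simp only [pmOn, Finset.mem_filter, Finset.mem_powerset, and_congr_left_iff]
  intro _
  constructor
  · intro h e he; exact Finset.mem_powerset.1 (h he)
  · intro h e he; exact Finset.mem_powerset.2 (h e he)

lemma pmOn_eq_biUnion {s : Finset V} {v : V} (hv : v ∈ s) :
    pmOn s = (s.erase v).biUnion
      (fun w => (pmOn ((s.erase v).erase w)).image (insert ({v,w} : Finset V))) := by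
  ext M
  simp only [Finset.mem_biUnion, Finset.mem_image]
  constructor
  · intro hM
    obtain ⟨hsub, h2, hdisj, hcov⟩ := mem_pmOn.1 hM
    obtain ⟨e, heM, hve⟩ := hcov v hv
    have hex : ∃ w, w ≠ v ∧ e = {v, w} := by
      obtain ⟨a, b, hab, rfl⟩ := Finset.card_eq_two.1 (h2 e heM)
      rcases Finset.mem_insert.1 hve with rfl | hvb
      · exact ⟨b, fun h => hab h.symm, rfl⟩
      · have hvb' : v = b := Finset.mem_singleton.1 hvb
        subst hvb'
        exact ⟨a, fun h => hab h, Finset.pair_comm a v⟩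
    obtain ⟨w, hwv, rfl⟩ := hex
    have hws : w ∈ s := hsub _ heM (by simp)
    refine ⟨w, Finset.mem_erase.2 ⟨hwv, hws⟩, M.erase {v, w}, ?_, Finset.insert_erase heM⟩
    rw [mem_pmOn]
    refine ⟨?_, ?_, ?_, ?_⟩
    · intro f hf
      obtain ⟨hfne, hfM⟩ := Finset.mem_erase.1 hf
      have hdj := hdisj f hfM _ heM hfne
      intro u hu
      have hus : u ∈ s := hsub f hfM hu
      have huv : u ∉ ({v, w} : Finset V) := Finset.disjoint_left.1 hdj hu
      simp only [Finset.mem_insert, Finset.mem_singleton] at huv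
      push_neg at huv
      exact Finset.mem_erase.2 ⟨huv.2, Finset.mem_erase.2 ⟨huv.1, hus⟩⟩
    · exact fun f hf => h2 f (Finset.mem_of_mem_erase hf)
    · exact fun a ha b hb hne => hdisj a (Finset.mem_of_mem_erase ha) b (Finset.mem_of_mem_erase hb) hne
    · intro u hu
      obtain ⟨huw, hu2⟩ := Finset.mem_erase.1 hu
      obtain ⟨huv, hus⟩ := Finset.mem_erase.1 hu2
      obtain ⟨f, hfM, huf⟩ := hcov u hus
      have hfne : f ≠ {v, w} := by
        rintro rfl
        simp only [Finset.mem_insert, Finset.mem_singleton] at huf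
        tauto
      exact ⟨f, Finset.mem_erase.2 ⟨hfne, hfM⟩, huf⟩
  · rintro ⟨w, hw, M', hM', rfl⟩
    obtain ⟨hwv, hws⟩ := Finset.mem_erase.1 hw
    obtain ⟨hsub, h2, hdisj, hcov⟩ := mem_pmOn.1 hM'
    have hedge : ∀ f ∈ M', v ∉ f ∧ w ∉ f := by
      intro f hf
      constructor
      · intro hvf
        exact (Finset.notMem_erase v s) (Finset.mem_of_mem_erase (hsub f hf hvf))
      · intro hwf
        have := hsub f hf hwf
        exact (Finset.notMem_erase w _) this
    rw [mem_pmOn]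
    refine ⟨?_, ?_, ?_, ?_⟩
    · intro f hf
      rcases Finset.mem_insert.1 hf with rfl | hfM
      · intro u hu
        simp only [Finset.mem_insert, Finset.mem_singleton] at hu
        rcases hu with rfl | rfl
        · exact hv
        · exact hws
      · intro u hu
        exact Finset.mem_of_mem_erase (Finset.mem_of_mem_erase (hsub f hfM hu))
    · intro f hf
      rcases Finset.mem_insert.1 hf with rfl | hfM
      · exact Finset.card_pair (fun h => hwv h.symm)
      · exact h2 f hfM
    · intro a ha b hb hne
      have hdvw : ∀ f ∈ M', Disjoint ({v, w} : Finset V) f := by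
        intro f hf
        rw [Finset.disjoint_left]
        intro u hu
        simp only [Finset.mem_insert, Finset.mem_singleton] at hu
        rcases hu with rfl | rfl
        · exact (hedge f hf).1
        · exact (hedge f hf).2
      rcases Finset.mem_insert.1 ha with rfl | haM
      · rcases Finset.mem_insert.1 hb with rfl | hbM
        · exact absurd rfl hne
        · exact hdvw b hbM
      · rcases Finset.mem_insert.1 hb with rfl | hbM
        · exact (hdvw a haM).symm
        · exact hdisj a haM b hbM hne
    · intro u hus
      by_cases huv : u = v
      · exact ⟨{v, w}, Finset.mem_insert_self _ _, by simp [huv]⟩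
      by_cases huw : u = w
      · exact ⟨{v, w}, Finset.mem_insert_self _ _, by simp [huw]⟩
      obtain ⟨f, hfM, huf⟩ := hcov u (Finset.mem_erase.2 ⟨huw, Finset.mem_erase.2 ⟨huv, hus⟩⟩)
      exact ⟨f, Finset.mem_insert_of_mem hfM, huf⟩

lemma pmOn_card_rec {s : Finset V} {v : V} (hv : v ∈ s) :
    (pmOn s).card = ∑ w ∈ s.erase v, (pmOn ((s.erase v).erase w)).card := by
  have hnotmem : ∀ w, ∀ M' ∈ pmOn ((s.erase v).erase w), ({v,w} : Finset V) ∉ M' := by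
    intro w M' hM' hmem
    have := (mem_pmOn.1 hM').1 _ hmem (Finset.mem_insert_self v _)
    exact (Finset.notMem_erase v s) (Finset.mem_of_mem_erase this)
  rw [pmOn_eq_biUnion hv, Finset.card_biUnion]
  · refine Finset.sum_congr rfl (fun w hw => ?_)
    apply Finset.card_image_of_injOn
    intro M₁ h1 M₂ h2 heq
    have e1 := Finset.erase_insert (hnotmem w M₁ h1)
    have e2 := Finset.erase_insert (hnotmem w M₂ h2)
    rw [← e1, ← e2, heq]
  · intro w hw w' hw' hne
    simp only [Function.onFun]; rw [Finset.disjoint_left]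
    rintro M hMw hMw'
    obtain ⟨M₁, h1, rfl⟩ := Finset.mem_image.1 hMw
    obtain ⟨M₂, h2, heq⟩ := Finset.mem_image.1 hMw'
    have hvw' : ({v, w'} : Finset V) ∈ insert ({v,w} : Finset V) M₁ := by
      rw [← heq]; exact Finset.mem_insert_self _ _
    rcases Finset.mem_insert.1 hvw' with hpair | hmem
    · apply hne
      have : w' ∈ ({v, w} : Finset V) :=
        hpair ▸ (Finset.mem_insert_of_mem (Finset.mem_singleton_self w'))
      simp only [Finset.mem_insert, Finset.mem_singleton] at this
      rcases this with rfl | rfl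
      · exact absurd (Finset.mem_erase.1 hw').1 (by simp)
      · rfl
    · have := (mem_pmOn.1 h1).1 _ hmem (Finset.mem_insert_self v _)
      exact (Finset.notMem_erase v s) (Finset.mem_of_mem_erase this)

lemma pmOn_card_vertices {s : Finset V} {M : Finset (Finset V)} (h : M ∈ pmOn s) :
    2 * M.card = s.card := by
  obtain ⟨hsub, h2, hdisj, hcov⟩ := mem_pmOn.1 h
  have hU : M.biUnion id = s := by
    apply Finset.Subset.antisymm
    · intro v hv
      obtain ⟨e, he, hve⟩ := Finset.mem_biUnion.1 hv
      exact hsub e he hve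
    · intro v hv
      obtain ⟨e, he, hve⟩ := hcov v hv
      exact Finset.mem_biUnion.2 ⟨e, he, hve⟩
  have hcb := Finset.card_biUnion (s := M) (t := id) (fun a ha b hb hab => hdisj a ha b hb hab)
  rw [hU] at hcb
  have : ∑ u ∈ M, (id u).card = ∑ _u ∈ M, 2 := Finset.sum_congr rfl (fun e he => h2 e he)
  rw [hcb, this, Finset.sum_const, smul_eq_mul, mul_comm]


def pmCount : ℕ → ℕ
  | 0 => 1
  | (m+1) => (2*m+1) * pmCount m

end Combinatorics

section New
variable {V : Type} [DecidableEq V]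

lemma card_pmOn (m : ℕ) : ∀ (s : Finset V), s.card = 2*m → (pmOn s).card = pmCount m := by
  induction m with
  | zero =>
    intro s hs
    have hse : s = ∅ := Finset.card_eq_zero.1 (by omega)
    subst hse
    have : pmOn (∅ : Finset V) = {∅} := by
      ext M
      rw [mem_pmOn, Finset.mem_singleton]
      constructor
      · rintro ⟨hsub, h2, -, -⟩
        rw [Finset.eq_empty_iff_forall_notMem]
        intro e he
        have he0 : e = ∅ := Finset.subset_empty.1 (hsub e he)
        have := h2 e he
        rw [he0] at this
        simp at this
      · rintro rfl
        refine ⟨by simp, by simp, by simp, by simp⟩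
    rw [this]
    rfl
  | succ m ih =>
    intro s hs
    have hne : s.Nonempty := Finset.card_pos.1 (by omega)
    obtain ⟨v, hv⟩ := hne
    rw [pmOn_card_rec hv]
    have hcongr : ∀ w ∈ s.erase v, (pmOn ((s.erase v).erase w)).card = pmCount m := by
      intro w hw
      apply ih
      rw [Finset.card_erase_of_mem hw, Finset.card_erase_of_mem hv, hs]
      omega
    rw [Finset.sum_congr rfl hcongr, Finset.sum_const, smul_eq_mul,
      Finset.card_erase_of_mem hv, hs]
    have h1 : 2 * (m + 1) - 1 = 2*m+1 := by omega
    rw [h1]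
    rfl

lemma pmCount_pos (m : ℕ) : 0 < pmCount m := by
  induction m with
  | zero => exact Nat.one_pos
  | succ m ih => exact Nat.mul_pos (by omega) ih

lemma pmCount_eq (n x : ℕ) (h : x ≤ n) :
    pmCount n = (∏ i ∈ Finset.range x, (2*n - 2*i - 1)) * pmCount (n - x) := by
  induction x with
  | zero => simp
  | succ x ih =>
    have hx : x ≤ n := by omega
    rw [Finset.prod_range_succ, ih hx]
    have h1 : n - x = (n - (x+1)) + 1 := by omega
    have h2 : pmCount ((n - (x+1)) + 1) = (2*(n-(x+1))+1) * pmCount (n - (x+1)) := rfl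
    have h3 : 2*(n-(x+1))+1 = 2*n - 2*x - 1 := by omega
    rw [h1, h2, h3]
    ring

variable [Fintype V]

lemma card_superset_le (T : Finset (Finset V)) (hT2 : ∀ e ∈ T, e.card = 2)
    (hTd : ∀ a ∈ T, ∀ b ∈ T, a ≠ b → Disjoint a b) (m : ℕ)
    (hm : Fintype.card V = 2*T.card + 2*m) :
    ((pmOn (Finset.univ : Finset V)).filter (fun M₀ => T ⊆ M₀)).card ≤ pmCount m := by
  set U : Finset V := Finset.univ \ T.biUnion id with hU
  have hbU : (T.biUnion id).card = 2 * T.card := by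
    have hcb := Finset.card_biUnion (s := T) (t := id) (fun a ha b hb hab => hTd a ha b hb hab)
    have hsum : ∑ u ∈ T, (id u).card = ∑ _u ∈ T, 2 := Finset.sum_congr rfl (fun e he => hT2 e he)
    rw [hsum, Finset.sum_const, smul_eq_mul, mul_comm] at hcb
    exact hcb
  have hUcard : U.card = 2 * m := by
    rw [hU, Finset.card_sdiff_of_subset (Finset.subset_univ _), Finset.card_univ, hbU]
    omega
  have hle : ((pmOn (Finset.univ : Finset V)).filter (fun M₀ => T ⊆ M₀)).card ≤ (pmOn U).card := by
    apply Finset.card_le_card_of_injOn (fun M₀ => M₀ \ T)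
    · intro M₀ hM₀
      obtain ⟨hpm, hTs⟩ := Finset.mem_filter.1 hM₀
      obtain ⟨hsub, h2, hdisj, hcov⟩ := mem_pmOn.1 hpm
      show M₀ \ T ∈ pmOn U; rw [mem_pmOn]
      refine ⟨?_, ?_, ?_, ?_⟩
      · intro f hf u hu
        obtain ⟨hfM, hfT⟩ := Finset.mem_sdiff.1 hf
        rw [hU, Finset.mem_sdiff]
        refine ⟨Finset.mem_univ u, ?_⟩
        intro hub
        obtain ⟨t, htT, hut⟩ := Finset.mem_biUnion.1 hub
        have htM : t ∈ M₀ := hTs htT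
        have hne : f ≠ t := fun h => hfT (h ▸ htT)
        exact Finset.disjoint_left.1 (hdisj f hfM t htM hne) hu hut
      · exact fun f hf => h2 f (Finset.mem_sdiff.1 hf).1
      · exact fun a ha b hb hne => hdisj a (Finset.mem_sdiff.1 ha).1 b (Finset.mem_sdiff.1 hb).1 hne
      · intro u hu
        rw [hU, Finset.mem_sdiff] at hu
        obtain ⟨f, hfM, huf⟩ := hcov u (Finset.mem_univ u)
        have hfT : f ∉ T := by
          intro hfT
          exact hu.2 (Finset.mem_biUnion.2 ⟨f, hfT, huf⟩)
        exact ⟨f, Finset.mem_sdiff.2 ⟨hfM, hfT⟩, huf⟩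
    · intro M₁ h1 M₂ h2 heq
      have hT1 : T ⊆ M₁ := (Finset.mem_filter.1 (by exact_mod_cast h1)).2
      have hT2' : T ⊆ M₂ := (Finset.mem_filter.1 (by exact_mod_cast h2)).2
      rw [← Finset.sdiff_union_of_subset hT1, ← Finset.sdiff_union_of_subset hT2']
      simp only at heq
      rw [heq]
  rw [card_pmOn m U hUcard] at hle
  exact hle

end New

section Poly
open Polynomial
lemma two_X_eq : (2:Polynomial ℕ) = C 2 := by norm_num

lemma coeff_one_add_two_X_pow (m d : ℕ) :
    ((1 + 2*X : Polynomial ℕ)^m).coeff d = m.choose d * 2^d := by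
  have hexp : (1 + 2*X : Polynomial ℕ)^m
      = ∑ k ∈ Finset.range (m+1), C (2^k * m.choose k) * X^k := by
    rw [add_comm, add_pow]
    refine Finset.sum_congr rfl (fun k hk => ?_)
    rw [mul_pow, two_X_eq, ← C_pow, one_pow, mul_one, ← C_eq_natCast, mul_right_comm, ← C_mul]
    simp
  rw [hexp, finset_sum_coeff]
  have hterm : ∀ k ∈ Finset.range (m+1),
      (C (2^k * m.choose k) * X^k).coeff d = if k = d then 2^d * m.choose d else 0 := by
    intro k hk
    rw [coeff_C_mul, coeff_X_pow]
    by_cases h : d = k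
    · subst h; simp
    · simp [h, Ne.symm h]
  rw [Finset.sum_congr rfl hterm, Finset.sum_ite_eq' (Finset.range (m+1)) d (fun _ => 2^d * m.choose d)]
  by_cases hd : d ∈ Finset.range (m+1)
  · simp [hd, mul_comm]
  · have : m.choose d = 0 := Nat.choose_eq_zero_of_lt (by simp at hd; omega)
    simp [hd, this]

lemma keyId (n x : ℕ) (hxn : x ≤ n) :
    ∑ j ∈ Finset.Icc (2*x - n) x, 2^(2*x-2*j) * (n.choose j) * ((n-j).choose (2*x-2*j))
      = (2*n).choose (2*x) := by
  have lhs1 : (((1:Polynomial ℕ) + X)^(2*n)).coeff (2*x) = (2*n).choose (2*x) :=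
    coeff_one_add_X_pow ℕ (2*n) (2*x)
  have hsq : ((1:Polynomial ℕ) + X)^(2*n) = (X^2 + (1 + 2*X))^n := by
    rw [pow_mul]
    congr 1
    ring
  have hexp : (X^2 + (1 + 2*X) : Polynomial ℕ)^n
      = ∑ j ∈ Finset.range (n+1), ((1+2*X)^(n-j) * C ((n.choose j : ℕ))) * X^(2*j) := by
    rw [add_pow]
    refine Finset.sum_congr rfl (fun j hj => ?_)
    rw [← pow_mul, ← C_eq_natCast]
    simp only [Nat.cast_id]
    ring
  have coeff2 : (((1:Polynomial ℕ) + X)^(2*n)).coeff (2*x)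
      = ∑ j ∈ Finset.range (n+1),
          if 2*j ≤ 2*x then 2^(2*x-2*j) * (n.choose j) * ((n-j).choose (2*x-2*j)) else 0 := by
    rw [hsq, hexp, finset_sum_coeff]
    refine Finset.sum_congr rfl (fun j hj => ?_)
    rw [coeff_mul_X_pow']
    by_cases h : 2*j ≤ 2*x
    · simp only [h, if_true]
      rw [coeff_mul_C, coeff_one_add_two_X_pow]
      ring
    · simp [h]
  rw [lhs1] at coeff2
  rw [coeff2]
  rw [Finset.sum_ite, Finset.sum_const_zero, add_zero]
  symm
  apply (Finset.sum_subset ?_ ?_).symm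
  · intro j hj
    simp only [Finset.mem_filter, Finset.mem_range, Finset.mem_Icc] at *
    omega
  · intro j hj hnj
    simp only [Finset.mem_filter, Finset.mem_range, Finset.mem_Icc] at hj hnj
    have hjx : j ≤ x := by omega
    have hjlow : j < 2*x - n := by omega
    have : (n - j).choose (2*x - 2*j) = 0 := Nat.choose_eq_zero_of_lt (by omega)
    rw [this, mul_zero]

end Poly

noncomputable def Treal (x j : ℕ) : ℝ :=
  (((2*x).choose (2*j) : ℝ) * ((2*j).factorial : ℝ)) / ((j.factorial : ℝ) * 2^j)

noncomputable def Greal (n x j : ℕ) : ℝ :=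
  2^(x-j) * ((n-x).factorial : ℝ) / ((n + j - 2*x).factorial : ℝ)

lemma Treal_form (x j : ℕ) (hj : j ≤ x) :
    Treal x j = ((2*x).factorial : ℝ) /
      (((2*x-2*j).factorial : ℝ) * (j.factorial : ℝ) * 2^j) := by
  rw [Treal, Nat.cast_choose ℝ (by omega : 2*j ≤ 2*x)]
  have h1 : (0:ℝ) < (2*j).factorial := by positivity
  have h2 : (0:ℝ) < (2*x-2*j).factorial := by positivity
  have h3 : (0:ℝ) < j.factorial := by positivity
  field_simp

lemma Treal_pos (x j : ℕ) : 0 < Treal x j ∨ 0 ≤ Treal x j := by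
  right; rw [Treal]; positivity

lemma Treal_nonneg (x j : ℕ) : 0 ≤ Treal x j := by rw [Treal]; positivity

lemma Treal_pos' (x j : ℕ) (hj : j ≤ x) : 0 < Treal x j := by
  rw [Treal_form x j hj]
  positivity

lemma Greal_nonneg (n x j : ℕ) : 0 ≤ Greal n x j := by rw [Greal]; positivity

-- nat-level product formula
lemma natProd (n x : ℕ) (hxn : x ≤ n) :
    (∏ i ∈ Finset.range x, (2*n - 2*i - 1)) * ((2*n-2*x).factorial * n.factorial * 2^x)
      = (2*n).factorial * (n-x).factorial := by
  induction x with
  | zero => simp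
  | succ x ih =>
    have hx : x ≤ n := by omega
    have IH := ih hx
    obtain ⟨a, ha⟩ : ∃ a, n - (x+1) = a := ⟨n - (x+1), rfl⟩
    have h1 : n - x = a + 1 := by omega
    have h2 : 2*n - 2*x = 2*a + 2 := by omega
    have h3 : 2*n - 2*(x+1) = 2*a := by omega
    have h4 : 2*n - 2*x - 1 = 2*a + 1 := by omega
    rw [Finset.prod_range_succ, h4, h3, ha]
    rw [h1, h2] at IH
    apply Nat.eq_of_mul_eq_mul_right (show 0 < a + 1 by omega)
    have e1 : (2*a+2).factorial = (2*a+2) * ((2*a+1) * (2*a).factorial) := by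
      rw [show 2*a+2 = (2*a+1)+1 by ring, Nat.factorial_succ, Nat.factorial_succ]
    have e2 : (a+1).factorial = (a+1) * a.factorial := Nat.factorial_succ a
    rw [e1, e2] at IH
    calc (∏ i ∈ Finset.range x, (2*n-2*i-1)) * (2*a+1) * ((2*a).factorial * n.factorial * 2^(x+1)) * (a+1)
        = (∏ i ∈ Finset.range x, (2*n-2*i-1)) * ((2*a+2) * ((2*a+1) * (2*a).factorial) * n.factorial * 2^x) := by
          rw [pow_succ]; ring
      _ = (2*n).factorial * ((a+1) * a.factorial) := IH
      _ = (2*n).factorial * a.factorial * (a+1) := by ring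

lemma prodReal_eq (n x : ℕ) (hxn : x ≤ n) :
    ∏ i ∈ Finset.range x, (2*(n:ℝ) - 2*i - 1)
      = ((∏ i ∈ Finset.range x, (2*n - 2*i - 1) : ℕ) : ℝ) := by
  rw [Nat.cast_prod]
  refine Finset.prod_congr rfl (fun i hi => ?_)
  have hix : i < x := Finset.mem_range.1 hi
  have : (2*n - 2*i - 1 : ℕ) = 2*n - (2*i+1) := by omega
  rw [this, Nat.cast_sub (by omega)]
  push_cast
  ring

lemma Pfact (n x : ℕ) (hxn : x ≤ n) :
    ∏ i ∈ Finset.range x, (2*(n:ℝ) - 2*i - 1)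
      = ((2*n).factorial : ℝ) * ((n-x).factorial : ℝ)
        / (((2*n-2*x).factorial : ℝ) * (n.factorial : ℝ) * 2^x) := by
  rw [prodReal_eq n x hxn]
  have := natProd n x hxn
  have hcast : ((∏ i ∈ Finset.range x, (2*n - 2*i - 1) : ℕ) : ℝ)
      * (((2*n-2*x).factorial : ℝ) * (n.factorial : ℝ) * 2^x)
      = ((2*n).factorial : ℝ) * ((n-x).factorial : ℝ) := by
    exact_mod_cast congrArg (Nat.cast : ℕ → ℝ) this
  have hpos : (0:ℝ) < ((2*n-2*x).factorial : ℝ) * (n.factorial : ℝ) * 2^x := by positivity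
  rw [eq_div_iff hpos.ne']
  exact hcast

lemma termwise (n x j : ℕ) (hxn : x ≤ n) (hjx : j ≤ x) (hjl : 2*x - n ≤ j) :
    Treal x j * Greal n x j
      = ((2^(2*x-2*j) * (n.choose j) * ((n-j).choose (2*x-2*j)) : ℕ) : ℝ)
        * (((2*x).factorial : ℝ) * ((n-x).factorial : ℝ) / (2^x * (n.factorial : ℝ))) := by
  have hjn : j ≤ n := le_trans hjx hxn
  have hc1 : ((n.choose j : ℕ) : ℝ) = (n.factorial : ℝ) / ((j.factorial : ℝ) * ((n-j).factorial : ℝ)) :=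
    Nat.cast_choose ℝ hjn
  have hsub : (n - j) - (2*x - 2*j) = n + j - 2*x := by omega
  have hc2 : (((n-j).choose (2*x-2*j) : ℕ) : ℝ)
      = ((n-j).factorial : ℝ) / (((2*x-2*j).factorial : ℝ) * ((n+j-2*x).factorial : ℝ)) := by
    rw [Nat.cast_choose ℝ (by omega : 2*x - 2*j ≤ n - j), hsub]
  rw [Treal_form x j hjx, Greal]
  push_cast
  rw [hc1, hc2]
  have hpow1 : (2:ℝ)^(2*x-2*j) = 2^(x-j) * 2^(x-j) := by
    rw [← pow_add]; congr 1; omega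
  have hpow2 : (2:ℝ)^x = 2^(x-j) * 2^j := by
    rw [← pow_add]; congr 1; omega
  rw [hpow1, hpow2]
  have f1 : (0:ℝ) < ((2*x-2*j).factorial : ℝ) := by positivity
  have f2 : (0:ℝ) < (j.factorial : ℝ) := by positivity
  have f3 : (0:ℝ) < ((n+j-2*x).factorial : ℝ) := by positivity
  have f4 : (0:ℝ) < ((n-j).factorial : ℝ) := by positivity
  have f5 : (0:ℝ) < (n.factorial : ℝ) := by positivity
  have f6 : (0:ℝ) < (2:ℝ)^(x-j) := by positivity
  have f7 : (0:ℝ) < (2:ℝ)^j := by positivity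
  field_simp

lemma A1 (n x : ℕ) (hxn : x ≤ n) :
    ∑ j ∈ Finset.Icc (2*x-n) x, Treal x j * Greal n x j
      = ∏ i ∈ Finset.range x, (2*(n:ℝ) - 2*i - 1) := by
  have hsum : ∑ j ∈ Finset.Icc (2*x-n) x, Treal x j * Greal n x j
      = (((2*n).choose (2*x) : ℕ) : ℝ)
        * (((2*x).factorial : ℝ) * ((n-x).factorial : ℝ) / (2^x * (n.factorial : ℝ))) := by
    rw [← keyId n x hxn]
    push_cast [Nat.cast_sum]
    rw [Finset.sum_mul]
    refine Finset.sum_congr rfl (fun j hj => ?_)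
    obtain ⟨hjl, hjx⟩ := Finset.mem_Icc.1 hj
    have := termwise n x j hxn hjx hjl
    push_cast at this
    rw [this]
  rw [hsum, Pfact n x hxn, Nat.cast_choose ℝ (by omega : 2*x ≤ 2*n)]
  have h1 : (0:ℝ) < ((2*x).factorial : ℝ) := by positivity
  have h2 : (0:ℝ) < ((2*n-2*x).factorial : ℝ) := by positivity
  have h3 : (0:ℝ) < (n.factorial : ℝ) := by positivity
  have h4 : (0:ℝ) < (2:ℝ)^x := by positivity
  have h5 : (2*n : ℕ) - 2*x = 2*n - 2*x := rfl
  field_simp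

lemma natIneq (n x : ℕ) (hx1 : 1 ≤ x) (hxlt : x < n) : n ≤ 2 * x^2 * (n - x) := by
  obtain ⟨d, rfl⟩ : ∃ d, n = x + d + 1 := ⟨n - x - 1, by omega⟩
  have hsub : x + d + 1 - x = d + 1 := by omega
  rw [hsub]
  have h0 : x ≤ x * x := Nat.le_mul_of_pos_left x hx1
  have h1 : x ≤ x * x * (d+1) := le_trans h0 (Nat.le_mul_of_pos_right _ (by omega))
  have h2 : d + 1 ≤ x * x * (d+1) := Nat.le_mul_of_pos_left (d+1) (by positivity)
  calc x + d + 1 = x + (d+1) := by ring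
    _ ≤ x*x*(d+1) + x*x*(d+1) := Nat.add_le_add h1 h2
    _ = 2*x^2*(d+1) := by ring

lemma Greal_ge (n x j : ℕ) (hxn : x ≤ n) (hj : 2*x - n ≤ j) (hjx : j < x) :
    2 * ((n:ℝ) - x) ≤ Greal n x j := by
  rw [Greal]
  have h1 : (2:ℝ) ≤ 2^(x-j) := by
    calc (2:ℝ) = 2^1 := (pow_one 2).symm
    _ ≤ 2^(x-j) := by
      apply pow_le_pow_right₀ (by norm_num)
      omega
  have h2 : ((n:ℝ) - x) * ((n+j-2*x).factorial : ℝ) ≤ ((n-x).factorial : ℝ) := by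
    have hnx : (n:ℝ) - x = ((n - x : ℕ) : ℝ) := by
      rw [Nat.cast_sub hxn]
    rw [hnx]
    by_cases hlt : x = n
    · subst hlt
      simp
    have hnats : (n + j - 2*x) ≤ (n - x) - 1 := by omega
    have : (n - x) * (n+j-2*x).factorial ≤ (n-x).factorial := by
      calc (n-x) * (n+j-2*x).factorial ≤ (n-x) * ((n-x)-1).factorial :=
            Nat.mul_le_mul_left _ (Nat.factorial_le hnats)
        _ = (n-x).factorial := by
            have h3 : n - x = ((n-x)-1)+1 := by omega
            rw [h3, Nat.factorial_succ]
            congr 1 <;> omega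
    exact_mod_cast this
  have hfpos : (0:ℝ) < ((n+j-2*x).factorial : ℝ) := by positivity
  rw [le_div_iff₀ hfpos]
  calc 2 * ((n:ℝ) - x) * ((n+j-2*x).factorial : ℝ)
      = 2 * (((n:ℝ) - x) * ((n+j-2*x).factorial : ℝ)) := by ring
    _ ≤ 2 * ((n-x).factorial : ℝ) := by
        apply mul_le_mul_of_nonneg_left h2 (by norm_num)
    _ ≤ 2^(x-j) * ((n-x).factorial : ℝ) := by
        apply mul_le_mul_of_nonneg_right h1 (by positivity)

lemma Treal_ratio (y : ℕ) : Treal (y+1) y = (y+1) * Treal (y+1) (y+1) := by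
  rw [Treal_form (y+1) y (by omega), Treal_form (y+1) (y+1) (le_refl _)]
  have h1 : 2*(y+1) - 2*y = 2 := by omega
  have h2 : 2*(y+1) - 2*(y+1) = 0 := by omega
  rw [h1, h2]
  have e1 : ((y+1).factorial : ℝ) = (y+1) * (y.factorial : ℝ) := by
    exact_mod_cast Nat.factorial_succ y
  have e2 : ((2:ℕ).factorial : ℝ) = 2 := by norm_num [Nat.factorial]
  have e3 : ((0:ℕ).factorial : ℝ) = 1 := by norm_num
  rw [e1, e2, e3]
  have f1 : (0:ℝ) < (y.factorial : ℝ) := by positivity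
  have f2 : (0:ℝ) < (2:ℝ)^y := by positivity
  have f3 : (0:ℝ) < (y:ℝ)+1 := by positivity
  rw [pow_succ]
  field_simp

lemma A2 (n x : ℕ) (hx1 : 1 ≤ x) (hxn : x ≤ n) :
    (n:ℝ) * ∑ j ∈ Finset.Icc (2*x-n) x, Treal x j
      ≤ 2 * Real.exp 1 * x^2 * ∏ i ∈ Finset.range x, (2*(n:ℝ) - 2*i - 1) := by
  have hE : (1:ℝ) ≤ Real.exp 1 := by
    nlinarith [Real.add_one_le_exp (1:ℝ)]
  rw [← A1 n x hxn]
  rcases eq_or_lt_of_le hxn with rfl | hxlt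
  · have hIcc : Finset.Icc (2*x - x) x = {x} := by
      have h : 2*x - x = x := by omega
      rw [h, Finset.Icc_self]
    rw [hIcc, Finset.sum_singleton, Finset.sum_singleton]
    have hG : Greal x x x = 1 := by
      rw [Greal]
      have h1 : x - x = 0 := by omega
      have h2 : x + x - 2*x = 0 := by omega
      rw [h1, h2]
      simp
    rw [hG, mul_one]
    have hT := Treal_pos' x x (le_refl x)
    have hxR : (1:ℝ) ≤ (x:ℝ) := by exact_mod_cast hx1
    have hx2 : (x:ℝ) ≤ 2 * Real.exp 1 * (x:ℝ)^2 := by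
      nlinarith [mul_nonneg (sub_nonneg.2 hxR) (by positivity : (0:ℝ) ≤ (x:ℝ)),
        mul_nonneg (by linarith : (0:ℝ) ≤ 2*Real.exp 1 - 1) (sq_nonneg (x:ℝ))]
    calc (x:ℝ) * Treal x x ≤ (2 * Real.exp 1 * (x:ℝ)^2) * Treal x x :=
          mul_le_mul_of_nonneg_right hx2 hT.le
      _ = 2 * Real.exp 1 * (x:ℝ)^2 * Treal x x := by ring
  · obtain ⟨y, rfl⟩ : ∃ y, x = y + 1 := ⟨x - 1, by omega⟩
    have hL : 2*(y+1) - n ≤ y + 1 := by omega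
    have hLy : 2*(y+1) - n ≤ y := by omega
    rw [Finset.sum_Icc_succ_top hL, Finset.sum_Icc_succ_top hL]
    have hnx1 : (1:ℝ) ≤ (n:ℝ) - (y+1) := by
      have h2 : ((y:ℝ)+1) + 1 ≤ (n:ℝ) := by exact_mod_cast Nat.succ_le_of_lt hxlt
      push_cast
      linarith
    have hxR : (1:ℝ) ≤ ((y:ℝ)+1) := by
      have := Nat.cast_nonneg (α := ℝ) y
      linarith
    have hnat : n ≤ 2 * (y+1)^2 * (n - (y+1)) := natIneq n (y+1) hx1 hxlt
    have hnR : (n:ℝ) ≤ 2 * ((y:ℝ)+1)^2 * ((n:ℝ) - (y+1)) := by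
      have hc := (Nat.cast_le (α := ℝ)).2 hnat
      push_cast [Nat.cast_sub (le_of_lt hxlt)] at hc
      push_cast
      linarith
    have step1 : ∀ j ∈ Finset.Icc (2*(y+1)-n) y,
        (n:ℝ) * Treal (y+1) j ≤ Real.exp 1 * ((y:ℝ)+1)^2 * (Treal (y+1) j * Greal n (y+1) j) := by
      intro j hj
      obtain ⟨hjl, hjy⟩ := Finset.mem_Icc.1 hj
      have hjx : j < y+1 := by omega
      have hG := Greal_ge n (y+1) j hxn hjl hjx
      have hGc : 2 * ((n:ℝ) - ((y:ℝ)+1)) ≤ Greal n (y+1) j := by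
        push_cast at hG
        linarith
      have hT := Treal_pos' (y+1) j (le_of_lt hjx)
      have hGn : (n:ℝ) ≤ Real.exp 1 * ((y:ℝ)+1)^2 * Greal n (y+1) j := by
        have hGnn := Greal_nonneg n (y+1) j
        have hcast : ((n:ℝ) - ((y:ℕ)+1:ℕ)) = (n:ℝ) - ((y:ℝ)+1) := by push_cast; ring
        nlinarith [mul_le_mul_of_nonneg_left hGc (show (0:ℝ) ≤ ((y:ℝ)+1)^2 by positivity),
          mul_nonneg (mul_nonneg (sub_nonneg.2 hE) (sq_nonneg ((y:ℝ)+1))) hGnn]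
      calc (n:ℝ) * Treal (y+1) j = Treal (y+1) j * (n:ℝ) := by ring
        _ ≤ Treal (y+1) j * (Real.exp 1 * ((y:ℝ)+1)^2 * Greal n (y+1) j) :=
            mul_le_mul_of_nonneg_left hGn (le_of_lt hT)
        _ = Real.exp 1 * ((y:ℝ)+1)^2 * (Treal (y+1) j * Greal n (y+1) j) := by ring
    have hGtop : Greal n (y+1) (y+1) = 1 := by
      rw [Greal]
      have h1 : (y+1) - (y+1) = 0 := by omega
      have h2 : n + (y+1) - 2*(y+1) = n - (y+1) := by omega
      have hf : (((n-(y+1)).factorial : ℕ):ℝ) ≠ 0 := by positivity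
      rw [h1, h2, pow_zero, one_mul, div_self hf]
    have hGy : Greal n (y+1) y = 2 * ((n:ℝ) - (y+1)) := by
      rw [Greal]
      have h1 : (y+1) - y = 1 := by omega
      have h2 : n + y - 2*(y+1) = (n - (y+1)) - 1 := by omega
      rw [h1, h2]
      have h3 : (n - (y+1)) = ((n-(y+1))-1) + 1 := by omega
      have h4 : ((n-(y+1)).factorial : ℝ)
          = ((n-(y+1)) : ℕ) * (((n-(y+1))-1).factorial : ℝ) := by
        have hc : ((n-(y+1)-1:ℕ):ℝ) + 1 = ((n-(y+1):ℕ):ℝ) := by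
          exact_mod_cast congrArg (Nat.cast (R := ℝ)) h3.symm
        conv_lhs => rw [h3, Nat.factorial_succ]
        push_cast
        rw [hc]
      rw [h4]
      have f1 : (0:ℝ) < (((n-(y+1))-1).factorial : ℝ) := by positivity
      have h5 : ((n - (y+1) : ℕ) : ℝ) = (n:ℝ) - ((y:ℝ)+1) := by
        rw [Nat.cast_sub hxn]
        push_cast
        ring
      rw [h5]
      have h6 : ((n:ℝ) - ((y:ℕ):ℝ) - 1) = (n:ℝ) - ((y:ℝ)+1) := by ring
      field_simp
    have step2 : (n:ℝ) * Treal (y+1) (y+1)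
        ≤ Real.exp 1 * ((y:ℝ)+1)^2 *
          (Treal (y+1) (y+1) * Greal n (y+1) (y+1) + Treal (y+1) y * Greal n (y+1) y) := by
      rw [hGtop, hGy, mul_one, Treal_ratio y]
      have hT := Treal_pos' (y+1) (y+1) (le_refl _)
      have hEx : (1:ℝ) ≤ Real.exp 1 * ((y:ℝ)+1) := by nlinarith [hE, hxR]
      have hAnn : (0:ℝ) ≤ 2 * ((y:ℝ)+1)^2 * ((n:ℝ) - (y+1)) := by nlinarith [hnx1]
      have h5 : 1 * (2 * ((y:ℝ)+1)^2 * ((n:ℝ) - (y+1)))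
          ≤ (Real.exp 1 * ((y:ℝ)+1)) * (2 * ((y:ℝ)+1)^2 * ((n:ℝ) - (y+1))) :=
        mul_le_mul_of_nonneg_right hEx hAnn
      have h7 : (0:ℝ) ≤ Real.exp 1 * ((y:ℝ)+1)^2 := by positivity
      have key : (n:ℝ) ≤ Real.exp 1 * ((y:ℝ)+1)^2 * (1 + ((y:ℝ)+1) * (2 * ((n:ℝ)-(y+1)))) := by
        push_cast
        push_cast at hnR h5 h7
        nlinarith [hnR, h5, h7]
      calc (n:ℝ) * Treal (y+1) (y+1) = Treal (y+1) (y+1) * (n:ℝ) := by ring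
        _ ≤ Treal (y+1) (y+1) * (Real.exp 1 * ((y:ℝ)+1)^2 * (1 + ((y:ℝ)+1) * (2 * ((n:ℝ)-(y+1))))) :=
            mul_le_mul_of_nonneg_left key (le_of_lt hT)
        _ = Real.exp 1 * ((y:ℝ)+1)^2 *
            (Treal (y+1) (y+1) + ((y:ℝ)+1) * Treal (y+1) (y+1) * (2 * ((n:ℝ) - (y+1)))) := by
            ring
    have hsum1 : (n:ℝ) * ∑ j ∈ Finset.Icc (2*(y+1)-n) y, Treal (y+1) j
        ≤ Real.exp 1 * ((y:ℝ)+1)^2 *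
          ∑ j ∈ Finset.Icc (2*(y+1)-n) y, Treal (y+1) j * Greal n (y+1) j := by
      rw [Finset.mul_sum, Finset.mul_sum]
      exact Finset.sum_le_sum step1
    have htopP : Treal (y+1) y * Greal n (y+1) y
        ≤ ∑ j ∈ Finset.Icc (2*(y+1)-n) y, Treal (y+1) j * Greal n (y+1) j := by
      apply Finset.single_le_sum (f := fun j => Treal (y+1) j * Greal n (y+1) j)
      · intro j hj
        exact mul_nonneg (Treal_nonneg _ j) (Greal_nonneg n _ j)
      · exact Finset.mem_Icc.2 ⟨hLy, le_refl y⟩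
    have hEx2 : (0:ℝ) ≤ Real.exp 1 * ((y:ℝ)+1)^2 := by positivity
    have hSnonneg : (0:ℝ) ≤ ∑ j ∈ Finset.Icc (2*(y+1)-n) y, Treal (y+1) j * Greal n (y+1) j :=
      Finset.sum_nonneg (fun j hj => mul_nonneg (Treal_nonneg _ j) (Greal_nonneg n _ j))
    have hTG : (0:ℝ) ≤ Treal (y+1) (y+1) * Greal n (y+1) (y+1) :=
      mul_nonneg (Treal_nonneg _ _) (Greal_nonneg _ _ _)
    have hcast2 : (((y:ℕ)+1:ℕ):ℝ)^2 = ((y:ℝ)+1)^2 := by push_cast; ring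
    calc (n:ℝ) * (∑ j ∈ Finset.Icc (2*(y+1)-n) y, Treal (y+1) j + Treal (y+1) (y+1))
        = (n:ℝ) * ∑ j ∈ Finset.Icc (2*(y+1)-n) y, Treal (y+1) j
          + (n:ℝ) * Treal (y+1) (y+1) := by ring
      _ ≤ Real.exp 1 * ((y:ℝ)+1)^2 *
            (∑ j ∈ Finset.Icc (2*(y+1)-n) y, Treal (y+1) j * Greal n (y+1) j)
          + Real.exp 1 * ((y:ℝ)+1)^2 *
            (Treal (y+1) (y+1) * Greal n (y+1) (y+1) + Treal (y+1) y * Greal n (y+1) y) :=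
          add_le_add hsum1 step2
      _ = Real.exp 1 * ((y:ℝ)+1)^2 *
            ((∑ j ∈ Finset.Icc (2*(y+1)-n) y, Treal (y+1) j * Greal n (y+1) j)
              + Treal (y+1) (y+1) * Greal n (y+1) (y+1))
          + Real.exp 1 * ((y:ℝ)+1)^2 * (Treal (y+1) y * Greal n (y+1) y) := by ring
      _ ≤ Real.exp 1 * ((y:ℝ)+1)^2 *
            ((∑ j ∈ Finset.Icc (2*(y+1)-n) y, Treal (y+1) j * Greal n (y+1) j)
              + Treal (y+1) (y+1) * Greal n (y+1) (y+1))
          + Real.exp 1 * ((y:ℝ)+1)^2 *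
            ((∑ j ∈ Finset.Icc (2*(y+1)-n) y, Treal (y+1) j * Greal n (y+1) j)
              + Treal (y+1) (y+1) * Greal n (y+1) (y+1)) := by
          apply add_le_add le_rfl
          apply mul_le_mul_of_nonneg_left _ hEx2
          linarith [htopP, hTG]
      _ = 2 * Real.exp 1 * (((y:ℕ)+1:ℕ):ℝ)^2 *
            ((∑ j ∈ Finset.Icc (2*(y+1)-n) y, Treal (y+1) j * Greal n (y+1) j)
              + Treal (y+1) (y+1) * Greal n (y+1) (y+1)) := by
          rw [hcast2]
          ring
section MainGlue

lemma chooseRel (n x : ℕ) (hx : 1 ≤ x) (hn : x ≤ n) :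
    n * (n-1).choose (x-1) = n.choose x * x := by
  obtain ⟨n', rfl⟩ : ∃ n', n = n' + 1 := ⟨n - 1, by omega⟩
  obtain ⟨x', rfl⟩ : ∃ x', x = x' + 1 := ⟨x - 1, by omega⟩
  simpa using Nat.add_one_mul_choose_eq n' x'

theorem mainTheorem (n x s k : ℕ) (hx1 : 1 ≤ x) (hxn : x ≤ n)
    (M : Fin s → Finset (Finset (Fin (2*n)))) (hM : ∀ i, IsPerfectMatching (M i))
    (hk : ∀ e : Finset (Fin (2*n)), e.card = 2 →
      (Finset.univ.filter (fun i => e ∈ M i)).card ≤ k)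
    (hcond : (k : ℝ) ≤
      (1 / (Real.exp 1 * (2*x) * (2*(n:ℝ) - 1) * ((n-1).choose (x-1)))) *
        ((∑ j ∈ Finset.Icc (2*x - n) x,
            (((2*x).choose (2*j) : ℝ) * ((2*j).factorial : ℝ)) /
              ((j.factorial : ℝ) * 2^j)) - Real.exp 1)) :
    ∃ M₀ : Finset (Finset (Fin (2*n))), IsPerfectMatching M₀ ∧
      ∀ i, (M₀ ∩ M i).card ≤ x - 1 := by
  classical
  have hn1 : 1 ≤ n := le_trans hx1 hxn
  have hcardV : Fintype.card (Fin (2*n)) = 2*n := Fintype.card_fin _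
  -- each M i is in pmOn univ
  have hMi : ∀ i, M i ∈ pmOn (Finset.univ : Finset (Fin (2*n))) := by
    intro i
    obtain ⟨⟨h2, hdisj⟩, hcov⟩ := hM i
    rw [mem_pmOn]
    exact ⟨fun e _ => e.subset_univ, h2,
      fun a ha b hb hne => hdisj (Finset.mem_coe.2 ha) (Finset.mem_coe.2 hb) hne,
      fun v _ => hcov v⟩
  have hMicard : ∀ i, (M i).card = n := by
    intro i
    have := pmOn_card_vertices (hMi i)
    rw [Finset.card_univ, hcardV] at this
    omega
  -- double counting : s ≤ k * (2n-1)
  have hsk : s ≤ k * (2*n - 1) := by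
    set E : Finset (Finset (Fin (2*n))) := Finset.univ.powersetCard 2 with hE
    have hEcard : E.card = n * (2*n-1) := by
      rw [hE, Finset.card_powersetCard, Finset.card_univ, hcardV, Nat.choose_two_right]
      have h1 : 2*n*(2*n-1) = (n*(2*n-1))*2 := by ring
      rw [h1, Nat.mul_div_cancel _ (by norm_num)]
    have hMiE : ∀ i, M i ⊆ E := by
      intro i e he
      rw [hE, Finset.mem_powersetCard]
      exact ⟨e.subset_univ, ((hM i).1).1 e he⟩
    have hcount : s * n = ∑ e ∈ E, (Finset.univ.filter (fun i => e ∈ M i)).card := by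
      have h1 : ∀ i : Fin s, M i = E.filter (fun e => e ∈ M i) := by
        intro i
        apply Finset.Subset.antisymm
        · intro e he
          exact Finset.mem_filter.2 ⟨hMiE i he, he⟩
        · intro e he
          exact (Finset.mem_filter.1 he).2
      calc s * n = ∑ _i : Fin s, n := by
            rw [Finset.sum_const, Finset.card_univ, Fintype.card_fin, smul_eq_mul]
        _ = ∑ i : Fin s, ∑ e ∈ E, (if e ∈ M i then 1 else 0) := by
            refine Finset.sum_congr rfl (fun i _ => ?_)
            rw [← Finset.card_filter, ← h1 i, hMicard i]
        _ = ∑ e ∈ E, ∑ i : Fin s, (if e ∈ M i then 1 else 0) := Finset.sum_comm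
        _ = ∑ e ∈ E, (Finset.univ.filter (fun i => e ∈ M i)).card := by
            refine Finset.sum_congr rfl (fun e _ => ?_)
            rw [Finset.card_filter]
    have hle : s * n ≤ (k * (2*n-1)) * n := by
      calc s * n = ∑ e ∈ E, (Finset.univ.filter (fun i => e ∈ M i)).card := hcount
        _ ≤ ∑ _e ∈ E, k := by
            refine Finset.sum_le_sum (fun e he => ?_)
            exact hk e (Finset.mem_powersetCard.1 (hE ▸ he)).2
        _ = E.card * k := by rw [Finset.sum_const, smul_eq_mul]
        _ = (k * (2*n-1)) * n := by rw [hEcard]; ring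
    exact Nat.le_of_mul_le_mul_right hle (by omega)
  -- bad sets bound
  set g' := pmCount (n - x) with hg'
  have hBad : ∀ i, ((pmOn (Finset.univ : Finset (Fin (2*n)))).filter
      (fun M₀ => x ≤ (M₀ ∩ M i).card)).card ≤ n.choose x * g' := by
    intro i
    have hsub : (pmOn (Finset.univ : Finset (Fin (2*n)))).filter
        (fun M₀ => x ≤ (M₀ ∩ M i).card)
        ⊆ ((M i).powersetCard x).biUnion (fun T =>
            (pmOn (Finset.univ : Finset (Fin (2*n)))).filter (fun M₀ => T ⊆ M₀)) := by
      intro M₀ hM₀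
      obtain ⟨hpm, hx'⟩ := Finset.mem_filter.1 hM₀
      obtain ⟨T, hTsub, hTcard⟩ := Finset.exists_subset_card_eq hx'
      refine Finset.mem_biUnion.2 ⟨T, ?_, ?_⟩
      · exact Finset.mem_powersetCard.2
          ⟨le_trans hTsub (Finset.inter_subset_right), hTcard⟩
      · exact Finset.mem_filter.2 ⟨hpm, le_trans hTsub (Finset.inter_subset_left)⟩
    calc ((pmOn (Finset.univ : Finset (Fin (2*n)))).filter
          (fun M₀ => x ≤ (M₀ ∩ M i).card)).card
        ≤ (((M i).powersetCard x).biUnion (fun T =>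
            (pmOn (Finset.univ : Finset (Fin (2*n)))).filter (fun M₀ => T ⊆ M₀))).card :=
          Finset.card_le_card hsub
      _ ≤ ∑ T ∈ (M i).powersetCard x,
            ((pmOn (Finset.univ : Finset (Fin (2*n)))).filter (fun M₀ => T ⊆ M₀)).card :=
          Finset.card_biUnion_le
      _ ≤ ∑ _T ∈ (M i).powersetCard x, g' := by
          refine Finset.sum_le_sum (fun T hT => ?_)
          obtain ⟨hTsub, hTcard⟩ := Finset.mem_powersetCard.1 hT
          apply card_superset_le T
          · exact fun e he => ((hM i).1).1 e (hTsub he)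
          · exact fun a ha b hb hne => ((hM i).1).2
              (Finset.mem_coe.2 (hTsub ha)) (Finset.mem_coe.2 (hTsub hb)) hne
          · rw [hcardV, hTcard]
            omega
      _ = n.choose x * g' := by
          rw [Finset.sum_const, smul_eq_mul, Finset.card_powersetCard, hMicard i]
  -- the strict numeric inequality
  have hstrict : s * (n.choose x * g') < pmCount n := by
    have hExp : (1:ℝ) ≤ Real.exp 1 := by nlinarith [Real.add_one_le_exp (1:ℝ)]
    have hExp0 : (0:ℝ) < Real.exp 1 := Real.exp_pos 1
    set Sr : ℝ := ∑ j ∈ Finset.Icc (2*x - n) x,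
        (((2*x).choose (2*j) : ℝ) * ((2*j).factorial : ℝ)) / ((j.factorial : ℝ) * 2^j)
      with hSr
    have hSrT : Sr = ∑ j ∈ Finset.Icc (2*x - n) x, Treal x j := by
      rw [hSr]
      exact Finset.sum_congr rfl (fun j _ => rfl)
    set Pr : ℝ := ∏ i ∈ Finset.range x, (2*(n:ℝ) - 2*i - 1) with hPr
    have hA2 : (n:ℝ) * Sr ≤ 2 * Real.exp 1 * x^2 * Pr := by
      rw [hSrT]
      exact A2 n x hx1 hxn
    have hCpos : 0 < (n-1).choose (x-1) := Nat.choose_pos (by omega)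
    have hCpos' : (0:ℝ) < ((n-1).choose (x-1) : ℝ) := by exact_mod_cast hCpos
    have hxR : (1:ℝ) ≤ (x:ℝ) := by exact_mod_cast hx1
    have hnR : (1:ℝ) ≤ (n:ℝ) := by exact_mod_cast hn1
    have h2n1 : (0:ℝ) < 2*(n:ℝ) - 1 := by linarith
    set D : ℝ := Real.exp 1 * (2*x) * (2*(n:ℝ) - 1) * ((n-1).choose (x-1)) with hD
    have hDpos : 0 < D := by
      rw [hD]
      have : (0:ℝ) < 2*(x:ℝ) := by linarith
      positivity
    have hkD : (k:ℝ) * D ≤ Sr - Real.exp 1 := by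
      have := mul_le_mul_of_nonneg_right hcond hDpos.le
      rwa [one_div, inv_mul_eq_div, div_mul_cancel₀ _ hDpos.ne'] at this
    -- k(2n-1)C(n,x) * (2 e x²) ≤ (Sr - e) * n < 2 e x² * Pr
    have hrel : (n:ℝ) * ((n-1).choose (x-1)) = (n.choose x : ℝ) * x := by
      exact_mod_cast congrArg (Nat.cast (R := ℝ)) (chooseRel n x hx1 hxn)
    have hchain : (k:ℝ) * (2*(n:ℝ)-1) * (n.choose x) * (2 * Real.exp 1 * x^2)
        < Pr * (2 * Real.exp 1 * x^2) := by
      have e1 : (k:ℝ) * (2*(n:ℝ)-1) * (n.choose x) * (2 * Real.exp 1 * x^2)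
          = ((k:ℝ) * D) * (n:ℝ) := by
        rw [hD]
        have : Real.exp 1 * (2*(x:ℝ)) * (2*(n:ℝ)-1) * ((n-1).choose (x-1)) * (n:ℝ)
            = Real.exp 1 * (2*(x:ℝ)) * (2*(n:ℝ)-1) * ((n:ℝ) * ((n-1).choose (x-1))) := by ring
        calc (k:ℝ) * (2*(n:ℝ)-1) * (n.choose x) * (2 * Real.exp 1 * x^2)
            = (k:ℝ) * (Real.exp 1 * (2*(x:ℝ)) * (2*(n:ℝ)-1) * ((n.choose x : ℝ) * (x:ℝ))) := by
              ring
          _ = (k:ℝ) * (Real.exp 1 * (2*(x:ℝ)) * (2*(n:ℝ)-1) * ((n:ℝ) * ((n-1).choose (x-1)))) := by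
              rw [← hrel]
          _ = ((k:ℝ) * (Real.exp 1 * (2*(x:ℝ)) * (2*(n:ℝ)-1) * ((n-1).choose (x-1)))) * (n:ℝ) := by
              ring
      rw [e1]
      calc ((k:ℝ) * D) * (n:ℝ) ≤ (Sr - Real.exp 1) * n :=
            mul_le_mul_of_nonneg_right hkD (by linarith)
        _ = Sr * n - Real.exp 1 * n := by ring
        _ < Sr * n := by nlinarith [hExp0, hnR]
        _ = (n:ℝ) * Sr := by ring
        _ ≤ 2 * Real.exp 1 * x^2 * Pr := hA2
        _ = Pr * (2 * Real.exp 1 * x^2) := by ring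
    have hmulpos : (0:ℝ) < 2 * Real.exp 1 * x^2 := by positivity
    have hkP : (k:ℝ) * (2*(n:ℝ)-1) * (n.choose x) < Pr :=
      lt_of_mul_lt_mul_right hchain hmulpos.le
    -- s C(n,x) < Pr
    have hsR : (s:ℝ) ≤ (k:ℝ) * (2*(n:ℝ)-1) := by
      have hcast : ((k * (2*n-1) : ℕ) : ℝ) = (k:ℝ) * (2*(n:ℝ)-1) := by
        rw [Nat.cast_mul, Nat.cast_sub (by omega : 1 ≤ 2*n)]
        push_cast
        ring
      calc (s:ℝ) ≤ ((k * (2*n-1) : ℕ) : ℝ) := by exact_mod_cast hsk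
        _ = (k:ℝ) * (2*(n:ℝ)-1) := hcast
    have hsP : (s:ℝ) * (n.choose x) < Pr := by
      have hCn : (0:ℝ) ≤ (n.choose x : ℝ) := by positivity
      calc (s:ℝ) * (n.choose x) ≤ ((k:ℝ) * (2*(n:ℝ)-1)) * (n.choose x) :=
            mul_le_mul_of_nonneg_right hsR hCn
        _ < Pr := hkP
    -- multiply by g' and cast back
    have hg'pos : 0 < g' := pmCount_pos _
    have hg'R : (0:ℝ) < (g' : ℝ) := by exact_mod_cast hg'pos
    have hPnat : Pr = ((∏ i ∈ Finset.range x, (2*n - 2*i - 1) : ℕ) : ℝ) :=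
      prodReal_eq n x hxn
    have hfinal : (s:ℝ) * (n.choose x) * (g':ℝ)
        < ((∏ i ∈ Finset.range x, (2*n - 2*i - 1) : ℕ) : ℝ) * (g':ℝ) := by
      rw [← hPnat]
      exact mul_lt_mul_of_pos_right hsP hg'R
    have hnatlt : s * (n.choose x) * g' < (∏ i ∈ Finset.range x, (2*n - 2*i - 1)) * g' := by
      exact_mod_cast hfinal
    calc s * (n.choose x * g') = s * (n.choose x) * g' := by ring
      _ < (∏ i ∈ Finset.range x, (2*n - 2*i - 1)) * g' := hnatlt
      _ = pmCount n := (pmCount_eq n x hxn).symm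
  -- counting argument
  set A := pmOn (Finset.univ : Finset (Fin (2*n))) with hA
  have hAcard : A.card = pmCount n := by
    rw [hA]
    apply card_pmOn
    rw [Finset.card_univ, hcardV]
  set bad := A.filter (fun M₀ => ¬ ∀ i, (M₀ ∩ M i).card ≤ x - 1) with hbad
  have hbadsub : bad ⊆ (Finset.univ : Finset (Fin s)).biUnion (fun i =>
      A.filter (fun M₀ => x ≤ (M₀ ∩ M i).card)) := by
    intro M₀ hM₀
    obtain ⟨hpm, hnot⟩ := Finset.mem_filter.1 hM₀
    push_neg at hnot
    obtain ⟨i, hi⟩ := hnot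
    refine Finset.mem_biUnion.2 ⟨i, Finset.mem_univ i, Finset.mem_filter.2 ⟨hpm, by omega⟩⟩
  have hbadcard : bad.card < A.card := by
    calc bad.card ≤ ((Finset.univ : Finset (Fin s)).biUnion (fun i =>
          A.filter (fun M₀ => x ≤ (M₀ ∩ M i).card))).card := Finset.card_le_card hbadsub
      _ ≤ ∑ i : Fin s, (A.filter (fun M₀ => x ≤ (M₀ ∩ M i).card)).card :=
          Finset.card_biUnion_le
      _ ≤ ∑ _i : Fin s, n.choose x * g' := Finset.sum_le_sum (fun i _ => hBad i)
      _ = s * (n.choose x * g') := by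
          rw [Finset.sum_const, Finset.card_univ, Fintype.card_fin, smul_eq_mul]
      _ < pmCount n := hstrict
      _ = A.card := hAcard.symm
  have hgood : 0 < (A.filter (fun M₀ => ∀ i, (M₀ ∩ M i).card ≤ x - 1)).card := by
    have hsubA : A ⊆ (A.filter (fun M₀ => ∀ i, (M₀ ∩ M i).card ≤ x - 1)) ∪ bad := by
      intro a ha
      by_cases hp : ∀ i, (a ∩ M i).card ≤ x - 1
      · exact Finset.mem_union_left _ (Finset.mem_filter.2 ⟨ha, hp⟩)
      · exact Finset.mem_union_right _ (Finset.mem_filter.2 ⟨ha, hp⟩)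
    have hcard2 : A.card ≤ (A.filter (fun M₀ => ∀ i, (M₀ ∩ M i).card ≤ x - 1)).card + bad.card :=
      le_trans (Finset.card_le_card hsubA) (Finset.card_union_le _ _)
    omega
  obtain ⟨M₀, hM₀⟩ := Finset.card_pos.1 hgood
  obtain ⟨hpm, hgoodM₀⟩ := Finset.mem_filter.1 hM₀
  obtain ⟨hsub, h2, hdisj, hcov⟩ := mem_pmOn.1 hpm
  refine ⟨M₀, ⟨⟨h2, fun a ha b hb hne => hdisj a (Finset.mem_coe.1 ha) b (Finset.mem_coe.1 hb) hne⟩,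
    fun v => hcov v (Finset.mem_univ v)⟩, hgoodM₀⟩

end MainGlue
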